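/- Suppose the time-invariant system ẋ = f(x) is interior contractive (IC) with respect to some norm |·|: (a) for every x₀ ∈ ∂Ω (the boundary of Ω) and every t > 0, φ(t, x₀) ∉ ∂Ω; and (b) μ(J(x)) < 0 for every x in the interior of Ω, where μ is the matrix measure induced by |·|. Then the system admits a unique equilibrium point e ∈ Ω (i.e., a unique e with f(e) = 0), this e lies in the interior of Ω, and φ(t, a) → e as t → ∞ for every a ∈ Ω. -/

import Mathlib

open Filter Topology

/-- The Jacobian matrix of `f` at `x`: `(jac f x) i j = ∂f_i/∂x_j (x)`. -/
noncomputable def jac {n : ℕ} (f : (Fin n → ℝ) → (Fin n → ℝ)) (x : Fin n → ℝ) :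
    Matrix (Fin n) (Fin n) ℝ :=
  fun i j => fderiv ℝ f x (Pi.single j 1) i

/-- The operator norm on `n × n` matrices induced by the vector norm `ν`. -/
noncomputable def opNorm {n : ℕ} (ν : Seminorm ℝ (Fin n → ℝ))
    (A : Matrix (Fin n) (Fin n) ℝ) : ℝ :=
  sSup {r : ℝ | ∃ y : Fin n → ℝ, ν y ≤ 1 ∧ r = ν (A.mulVec y)}

section Auxiliary

variable {n : ℕ}

lemma sem_sum_le (ν : Seminorm ℝ (Fin n → ℝ)) (s : Finset (Fin n)) (g : Fin n → (Fin n → ℝ)) :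
    ν (∑ i ∈ s, g i) ≤ ∑ i ∈ s, ν (g i) := by
  classical
  induction s using Finset.induction with
  | empty => simp
  | insert a s h ih =>
    simp only [Finset.sum_insert h]
    exact (map_add_le_add ν _ _).trans (by linarith)

lemma nu_upper (ν : Seminorm ℝ (Fin n → ℝ)) : ∃ C > 0, ∀ y, ν y ≤ C * ‖y‖ := by
  refine ⟨(∑ i, ν (Pi.single i 1)) + 1, by positivity, fun y => ?_⟩
  have h1 : ν y ≤ ∑ i, ν (Pi.single i (y i)) := by
    calc ν y = ν (∑ i, Pi.single i (y i)) := by rw [Finset.univ_sum_single]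
    _ ≤ _ := sem_sum_le ν _ _
  have h2 : ∀ i, ν (Pi.single i (y i)) ≤ ν (Pi.single i 1) * ‖y‖ := by
    intro i
    have hs : Pi.single i (y i) = y i • (Pi.single i 1 : Fin n → ℝ) := by
      rw [← Pi.single_smul, smul_eq_mul, mul_one]
    rw [hs, map_smul_eq_mul]
    have h3 := norm_le_pi_norm y i
    simp only [Real.norm_eq_abs] at h3
    have h0 := apply_nonneg ν (Pi.single i 1 : Fin n → ℝ)
    calc |y i| * ν (Pi.single i 1) ≤ ‖y‖ * ν (Pi.single i 1) := by nlinarith [abs_nonneg (y i)]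
    _ = _ := mul_comm _ _
  calc ν y ≤ ∑ i, ν (Pi.single i 1) * ‖y‖ := h1.trans (Finset.sum_le_sum fun i _ => h2 i)
  _ = (∑ i, ν (Pi.single i 1)) * ‖y‖ := by rw [Finset.sum_mul]
  _ ≤ _ := by nlinarith [norm_nonneg y]

lemma nu_continuous (ν : Seminorm ℝ (Fin n → ℝ)) {C : ℝ} (hC : 0 < C)
    (hCle : ∀ y, ν y ≤ C * ‖y‖) : Continuous (fun y => (ν y : ℝ)) := by
  have hl : LipschitzWith C.toNNReal (fun y => (ν y : ℝ)) := by
    apply LipschitzWith.of_dist_le_mul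
    intro a b
    rw [Real.dist_eq, dist_eq_norm]
    have h1 : ν a - ν b ≤ ν (a - b) := by
      have := map_add_le_add ν (a - b) b; simp at this; linarith
    have h2 : ν b - ν a ≤ ν (a - b) := by
      have := map_add_le_add ν (b - a) a; simp at this
      rw [map_sub_rev] at this; linarith
    have := hCle (a - b)
    rw [abs_sub_le_iff]
    constructor <;> simp only [Real.coe_toNNReal _ hC.le] <;> linarith
  exact hl.continuous

lemma nu_lower (ν : Seminorm ℝ (Fin n → ℝ)) (hνdef : ∀ y, ν y = 0 → y = 0) (hn : 0 < n)
    {C : ℝ} (hC : 0 < C) (hCle : ∀ y, ν y ≤ C * ‖y‖) :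
    ∃ c > 0, ∀ y, c * ‖y‖ ≤ ν y := by
  haveI : Nonempty (Fin n) := Fin.pos_iff_nonempty.mp hn
  have hcont : Continuous (fun y => (ν y : ℝ)) := nu_continuous ν hC hCle
  have hsne : (Metric.sphere (0 : Fin n → ℝ) 1).Nonempty :=
    NormedSpace.sphere_nonempty.mpr zero_le_one
  obtain ⟨x₀, hx₀s, hmin⟩ := (isCompact_sphere (0 : Fin n → ℝ) 1).exists_isMinOn hsne
    hcont.continuousOn
  have hx₀ : ‖x₀‖ = 1 := by simpa using hx₀s
  have hc : 0 < ν x₀ := by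
    rcases (apply_nonneg ν x₀).lt_or_eq with h | h
    · exact h
    · exfalso
      have := hνdef x₀ h.symm
      rw [this] at hx₀; simp at hx₀
  refine ⟨ν x₀, hc, fun y => ?_⟩
  rcases eq_or_ne y 0 with rfl | hy
  · simp
  · have hyn : ‖y‖ ≠ 0 := norm_ne_zero_iff.mpr hy
    have hmem : (‖y‖⁻¹ • y) ∈ Metric.sphere (0 : Fin n → ℝ) 1 := by
      simp [norm_smul, abs_inv, abs_of_nonneg (norm_nonneg y), inv_mul_cancel₀ hyn]
    have h2 : ν x₀ ≤ ν (‖y‖⁻¹ • y) := hmin hmem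
    rw [map_smul_eq_mul] at h2
    rw [norm_inv, norm_norm] at h2
    have hpos : (0:ℝ) < ‖y‖ := lt_of_le_of_ne (norm_nonneg y) (Ne.symm hyn)
    calc ν x₀ * ‖y‖ ≤ (‖y‖⁻¹ * ν y) * ‖y‖ := by nlinarith
    _ = ν y := by field_simp

lemma opNorm_set_bddAbove (ν : Seminorm ℝ (Fin n → ℝ)) {c : ℝ} (hc : 0 < c)
    (hlow : ∀ y, c * ‖y‖ ≤ ν y) {C : ℝ} (hC : 0 < C) (hup : ∀ y, ν y ≤ C * ‖y‖)
    (A : Matrix (Fin n) (Fin n) ℝ) :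
    BddAbove {r : ℝ | ∃ y : Fin n → ℝ, ν y ≤ 1 ∧ r = ν (A.mulVec y)} := by
  set K := ‖LinearMap.toContinuousLinearMap A.mulVecLin‖ with hK
  have hKn : 0 ≤ K := norm_nonneg _
  refine ⟨C * K * c⁻¹, ?_⟩
  rintro r ⟨y, hy1, rfl⟩
  have h1 : ‖A.mulVec y‖ ≤ K * ‖y‖ := by
    simpa using (LinearMap.toContinuousLinearMap A.mulVecLin).le_opNorm y
  have h2 : c * ‖y‖ ≤ 1 := (hlow y).trans hy1
  have h3 := hup (A.mulVec y)
  have h4 : 0 ≤ ‖y‖ := norm_nonneg y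
  have h5 : ‖y‖ ≤ c⁻¹ := by rw [← one_div]; rw [mul_comm] at h2; exact (le_div_iff₀ hc).mpr h2
  have h6 : 0 ≤ ‖A.mulVec y‖ := norm_nonneg _
  calc ν (A.mulVec y) ≤ C * ‖A.mulVec y‖ := h3
  _ ≤ C * (K * ‖y‖) := by nlinarith
  _ = C * K * ‖y‖ := by ring
  _ ≤ C * K * c⁻¹ := by nlinarith [inv_nonneg.mpr hc.le, mul_nonneg hC.le hKn]

lemma nu_mulVec_le (ν : Seminorm ℝ (Fin n → ℝ)) (hνdef : ∀ y, ν y = 0 → y = 0)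
    {c C : ℝ} (hc : 0 < c) (hlow : ∀ y, c * ‖y‖ ≤ ν y) (hC : 0 < C) (hup : ∀ y, ν y ≤ C * ‖y‖)
    (A : Matrix (Fin n) (Fin n) ℝ) (y : Fin n → ℝ) :
    ν (A.mulVec y) ≤ opNorm ν A * ν y := by
  have hbdd := opNorm_set_bddAbove ν hc hlow hC hup A
  rcases (apply_nonneg ν y).lt_or_eq with hy | hy
  · have h1 : ν ((ν y)⁻¹ • y) ≤ 1 := by
      rw [map_smul_eq_mul, Real.norm_eq_abs, abs_inv, abs_of_pos hy, inv_mul_cancel₀ hy.ne']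
    have hle := le_csSup hbdd ⟨_, h1, rfl⟩
    rw [Matrix.mulVec_smul, map_smul_eq_mul, Real.norm_eq_abs, abs_inv, abs_of_pos hy] at hle
    have := mul_le_mul_of_nonneg_right hle hy.le
    rw [inv_mul_eq_div, div_mul_cancel₀ _ hy.ne'] at this
    rw [opNorm]
    linarith
  · have : y = 0 := hνdef y hy.symm
    subst this
    simp [Matrix.mulVec_zero]

lemma jac_mulVec (f : (Fin n → ℝ) → (Fin n → ℝ)) (x v : Fin n → ℝ) :
    (jac f x).mulVec v = fderiv ℝ f x v := by
  have hv : v = ∑ j, v j • (Pi.single j 1 : Fin n → ℝ) := by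
    conv_lhs => rw [← Finset.univ_sum_single v]
    congr 1; funext j; rw [← Pi.single_smul, smul_eq_mul, mul_one]
  funext i
  rw [Matrix.mulVec, dotProduct]
  conv_rhs => rw [hv]
  rw [map_sum]
  simp [jac, mul_comm]

/-- Local one-sided Lipschitz/contraction estimate near an interior point. -/
lemma lemA {Ω : Set (Fin n → ℝ)}
    (ν : Seminorm ℝ (Fin n → ℝ))
    {c C : ℝ} (hc : 0 < c) (hlow : ∀ y, c * ‖y‖ ≤ ν y) (hC : 0 < C) (hup : ∀ y, ν y ≤ C * ‖y‖)
    (numul : ∀ (A : Matrix (Fin n) (Fin n) ℝ) (y : Fin n → ℝ),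
      ν (A.mulVec y) ≤ opNorm ν A * ν y)
    {f : (Fin n → ℝ) → (Fin n → ℝ)} (hf : ContDiff ℝ 1 f)
    {μ : Matrix (Fin n) (Fin n) ℝ → ℝ}
    (hμ : ∀ A : Matrix (Fin n) (Fin n) ℝ,
      Tendsto (fun ε : ℝ => (opNorm ν ((1 : Matrix (Fin n) (Fin n) ℝ) + ε • A) - 1) / ε)
        (𝓝[>] (0:ℝ)) (𝓝 (μ A)))
    {x : Fin n → ℝ} (hx : x ∈ interior Ω) (hm : μ (jac f x) < 0) :
    ∃ δ > 0, ∃ κ < 0, ∃ h₀ > 0, Metric.ball x δ ⊆ interior Ω ∧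
      ∀ y ∈ Metric.ball x δ, ∀ z ∈ Metric.ball x δ, ∀ h ∈ Set.Ioo 0 h₀,
        ν (y - z + h • (f y - f z)) ≤ (1 + h * κ) * ν (y - z) := by
  set A := jac f x with hA
  set m := μ A with hmdef
  set L := fderiv ℝ f x with hL
  have hev : ∀ᶠ h in 𝓝[>] (0:ℝ),
      (opNorm ν ((1 : Matrix (Fin n) (Fin n) ℝ) + h • A) - 1) / h < m / 2 :=
    (hμ A).eventually (eventually_lt_nhds (by linarith))
  obtain ⟨h₀, hh₀pos, hh₀⟩ : ∃ h₀ > 0, ∀ h ∈ Set.Ioo (0:ℝ) h₀,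
      opNorm ν ((1 : Matrix (Fin n) (Fin n) ℝ) + h • A) ≤ 1 + h * (m/2) := by
    rw [eventually_nhdsWithin_iff] at hev
    obtain ⟨ε, hε, hball⟩ := Metric.eventually_nhds_iff.mp hev
    refine ⟨ε, hε, fun h hh => ?_⟩
    have h1 := hball (show dist h 0 < ε by
      rw [Real.dist_eq, sub_zero, abs_of_pos hh.1]; exact hh.2) hh.1
    rw [div_lt_iff₀ hh.1] at h1
    nlinarith [hh.1]
  set η := -m * c / (4 * C) with hη
  have hηpos : 0 < η := by
    apply div_pos <;> nlinarith
  have hcontd : Continuous (fderiv ℝ f) := hf.continuous_fderiv one_ne_zero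
  have h2 : ∀ᶠ u in 𝓝 x, ‖fderiv ℝ f u - L‖ < η := by
    have : Tendsto (fun u => ‖fderiv ℝ f u - L‖) (𝓝 x) (𝓝 ‖L - L‖) :=
      ((hcontd.tendsto x).sub tendsto_const_nhds).norm
    rw [sub_self, norm_zero] at this
    exact this.eventually (eventually_lt_nhds hηpos)
  obtain ⟨δ1, hδ1, hball1⟩ := Metric.eventually_nhds_iff.mp h2
  obtain ⟨δ2, hδ2, hball2⟩ := Metric.isOpen_iff.mp isOpen_interior x hx
  refine ⟨min δ1 δ2, lt_min hδ1 hδ2, m/4, by linarith, h₀, hh₀pos,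
    (Metric.ball_subset_ball (min_le_right _ _)).trans hball2, ?_⟩
  intro y hy z hz h hh
  set v := y - z with hv
  have hconv : Convex ℝ (Metric.ball x (min δ1 δ2)) := convex_ball x _
  have hdiff : ∀ u ∈ Metric.ball x (min δ1 δ2), DifferentiableAt ℝ f u :=
    fun u _ => (hf.differentiable one_ne_zero) u
  have hbd : ∀ u ∈ Metric.ball x (min δ1 δ2), ‖fderiv ℝ f u - L‖ ≤ η := by
    intro u hu
    exact (hball1 (lt_of_lt_of_le (Metric.mem_ball.mp hu) (min_le_left _ _))).le
  have hR : ‖f y - f z - L v‖ ≤ η * ‖v‖ :=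
    hconv.norm_image_sub_le_of_norm_fderiv_le' hdiff hbd hz hy
  have e1 : ν (v + h • (L v)) ≤ (1 + h * (m/2)) * ν v := by
    have hid : v + h • (L v) = ((1 : Matrix (Fin n) (Fin n) ℝ) + h • A).mulVec v := by
      rw [Matrix.add_mulVec, Matrix.one_mulVec, Matrix.smul_mulVec, jac_mulVec]
    rw [hid]
    calc ν _ ≤ opNorm ν ((1 : Matrix (Fin n) (Fin n) ℝ) + h • A) * ν v := numul _ _
    _ ≤ (1 + h * (m/2)) * ν v := by
        apply mul_le_mul_of_nonneg_right (hh₀ h hh) (apply_nonneg ν v)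
  have e2 : ν (h • (f y - f z - L v)) ≤ h * (-m/4) * ν v := by
    rw [map_smul_eq_mul, Real.norm_eq_abs, abs_of_pos hh.1]
    have h3 : ν (f y - f z - L v) ≤ C * (η * ‖v‖) :=
      (hup _).trans (by nlinarith [norm_nonneg (f y - f z - L v)])
    have h4 : C * (η * ‖v‖) ≤ (-m/4) * ν v := by
      have h5 : c * ‖v‖ ≤ ν v := hlow v
      have h6 : C * η = -m * c / 4 := by
        rw [hη, mul_div_assoc', div_eq_div_iff (mul_pos four_pos hC).ne' (by norm_num)]; ring
      rw [← mul_assoc, h6]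
      nlinarith [norm_nonneg v]
    nlinarith [apply_nonneg ν (f y - f z - L v), hh.1.le, h3.trans h4]
  calc ν (v + h • (f y - f z))
      = ν (v + h • (L v) + h • (f y - f z - L v)) := by
        congr 1
        module
  _ ≤ ν (v + h • (L v)) + ν (h • (f y - f z - L v)) := map_add_le_add ν _ _
  _ ≤ (1 + h * (m/2)) * ν v + h * (-m/4) * ν v := add_le_add e1 e2
  _ = (1 + h * (m/4)) * ν v := by ring

/-- Global one-sided contraction estimate along a segment contained in the interior. -/
lemma lemB {Ω : Set (Fin n → ℝ)}
    (ν : Seminorm ℝ (Fin n → ℝ))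
    {f : (Fin n → ℝ) → (Fin n → ℝ)}
    (hA : ∀ x ∈ interior Ω, ∃ δ > 0, ∃ κ < 0, ∃ h₀ > 0, Metric.ball x δ ⊆ interior Ω ∧
      ∀ y ∈ Metric.ball x δ, ∀ z ∈ Metric.ball x δ, ∀ h ∈ Set.Ioo 0 h₀,
        ν (y - z + h • (f y - f z)) ≤ (1 + h * κ) * ν (y - z))
    {y z : Fin n → ℝ} (hseg : segment ℝ y z ⊆ interior Ω) :
    ∃ κ < 0, ∃ h₀ > 0, ∀ h ∈ Set.Ioo 0 h₀,
      ν (y - z + h • (f y - f z)) ≤ (1 + h * κ) * ν (y - z) := by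
  classical
  set K := segment ℝ y z with hK
  have hKcomp : IsCompact K := by
    rw [hK, segment_eq_image']
    exact isCompact_Icc.image (by continuity)
  have H : ∀ p ∈ K, ∃ δ > 0, ∃ κ < 0, ∃ h₀ > 0, Metric.ball p δ ⊆ interior Ω ∧
      ∀ u ∈ Metric.ball p δ, ∀ v ∈ Metric.ball p δ, ∀ h ∈ Set.Ioo 0 h₀,
        ν (u - v + h • (f u - f v)) ≤ (1 + h * κ) * ν (u - v) :=
    fun p hp => hA p (hseg hp)
  choose! δ hδ κ hκ h₀ hh₀ hball hest using H
  have hcov : K ⊆ ⋃ p ∈ K, Metric.ball p (δ p / 2) := by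
    intro p hp
    exact Set.mem_biUnion hp (Metric.mem_ball_self (by linarith [hδ p hp]))
  obtain ⟨b', hb'K, hb'fin, hb'cov⟩ :=
    hKcomp.elim_finite_subcover_image (fun p _ => Metric.isOpen_ball) hcov
  have hyK : y ∈ K := left_mem_segment ℝ y z
  set F := hb'fin.toFinset with hF
  have hFK : ∀ p ∈ F, p ∈ K := by intro p hp; exact hb'K (hb'fin.mem_toFinset.mp hp)
  have hcov' : ∀ q ∈ K, ∃ p ∈ F, q ∈ Metric.ball p (δ p / 2) := by
    intro q hq
    have := hb'cov hq
    simp only [Set.mem_iUnion, exists_prop] at this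
    obtain ⟨p, hp, hqp⟩ := this
    exact ⟨p, hb'fin.mem_toFinset.mpr hp, hqp⟩
  have hFne : F.Nonempty := by
    obtain ⟨p, hp, _⟩ := hcov' y hyK
    exact ⟨p, hp⟩
  set ρ := F.inf' hFne (fun p => δ p / 2) with hρ
  have hρpos : 0 < ρ := by
    rw [hρ, Finset.lt_inf'_iff]
    intro p hp; linarith [hδ p (hFK p hp)]
  set κs := F.sup' hFne κ with hκs
  have hκsneg : κs < 0 := by
    rw [hκs, Finset.sup'_lt_iff]
    intro p hp; exact hκ p (hFK p hp)
  set h₀s := F.inf' hFne h₀ with hh₀s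
  have hh₀spos : 0 < h₀s := by
    rw [hh₀s, Finset.lt_inf'_iff]
    intro p hp; exact hh₀ p (hFK p hp)
  refine ⟨κs, hκsneg, h₀s, hh₀spos, ?_⟩
  intro h hh
  set N : ℕ := ⌈‖z - y‖ / ρ⌉₊ + 1 with hN
  have hNpos : (0:ℝ) < N := by positivity
  have hstep : ‖z - y‖ / N < ρ := by
    rw [div_lt_iff₀ hNpos]
    have h1 : ‖z - y‖ / ρ ≤ ⌈‖z - y‖ / ρ⌉₊ := Nat.le_ceil _
    rw [div_le_iff₀ hρpos] at h1
    have h2 : (⌈‖z - y‖ / ρ⌉₊ : ℝ) * ρ < N * ρ := by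
      apply mul_lt_mul_of_pos_right _ hρpos
      rw [hN]; push_cast; linarith
    calc ‖z - y‖ ≤ _ := h1
    _ < _ := h2
    _ = ρ * N := mul_comm _ _
  set w : ℕ → (Fin n → ℝ) := fun i => y + ((i:ℝ)/N) • (z - y) with hw
  have hw0 : w 0 = y := by simp [hw]
  have hwN : w N = z := by
    simp only [hw, div_self hNpos.ne']
    module
  have hwdiff : ∀ i : ℕ, w i - w (i+1) = -((1:ℝ)/(N:ℝ)) • (z - y) := by
    intro i
    have hcast : ((i+1 : ℕ) : ℝ) = (i:ℝ) + 1 := by push_cast; ring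
    simp only [hw, hcast]
    rw [show y + ((i:ℝ)/N) • (z - y) - (y + (((i:ℝ)+1)/N) • (z - y))
        = (((i:ℝ)/N) - (((i:ℝ)+1)/N)) • (z-y) from by module]
    congr 1
    field_simp
    ring
  have hwK : ∀ i ≤ N, w i ∈ K := by
    intro i hi
    rw [hK, segment_eq_image']
    refine ⟨(i:ℝ)/N, ⟨by positivity, ?_⟩, rfl⟩
    rw [div_le_one hNpos]
    exact_mod_cast hi
  have hterm : ∀ i < N, ν (w i - w (i+1) + h • (f (w i) - f (w (i+1))))
      ≤ (1 + h * κs) * ν (w i - w (i+1)) := by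
    intro i hi
    obtain ⟨p, hpF, hip⟩ := hcov' (w i) (hwK i hi.le)
    have hpK := hFK p hpF
    have hi1 : w (i+1) ∈ Metric.ball p (δ p) := by
      rw [Metric.mem_ball]
      have hd : dist (w (i+1)) (w i) < ρ := by
        rw [dist_eq_norm, show w (i+1) - w i = -(w i - w (i+1)) from by abel, norm_neg,
          hwdiff i, norm_smul]
        simp only [norm_neg, Real.norm_eq_abs, abs_of_pos (by positivity :
          (0:ℝ) < 1/(N:ℝ))]
        rw [one_div, inv_mul_eq_div]
        exact hstep
      have hρp : ρ ≤ δ p / 2 := Finset.inf'_le _ hpF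
      calc dist (w (i+1)) p ≤ dist (w (i+1)) (w i) + dist (w i) p := dist_triangle _ _ _
      _ < ρ + δ p / 2 := add_lt_add hd (Metric.mem_ball.mp hip)
      _ ≤ δ p := by linarith
    have hi0 : w i ∈ Metric.ball p (δ p) :=
      Metric.ball_subset_ball (by linarith [hδ p hpK]) hip
    have hhp : h ∈ Set.Ioo 0 (h₀ p) :=
      ⟨hh.1, hh.2.trans_le (Finset.inf'_le _ hpF)⟩
    have hterm1 := hest p hpK (w i) hi0 (w (i+1)) hi1 h hhp
    have hκle : κ p ≤ κs := Finset.le_sup' _ hpF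
    calc ν _ ≤ (1 + h * κ p) * ν (w i - w (i+1)) := hterm1
    _ ≤ (1 + h * κs) * ν (w i - w (i+1)) := by
        apply mul_le_mul_of_nonneg_right _ (apply_nonneg ν _)
        nlinarith [hh.1]
  have htel : y - z + h • (f y - f z)
      = ∑ i ∈ Finset.range N, (w i - w (i+1) + h • (f (w i) - f (w (i+1)))) := by
    rw [Finset.sum_add_distrib, Finset.sum_range_sub' w N, ← Finset.smul_sum,
      Finset.sum_range_sub' (fun i => f (w i)) N, hw0, hwN]
  have hsum : ν (y - z + h • (f y - f z))
      ≤ ∑ i ∈ Finset.range N, ν (w i - w (i+1) + h • (f (w i) - f (w (i+1)))) := by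
    rw [htel]
    induction' (Finset.range N) using Finset.induction with a s ha ih
    · simp
    · simp only [Finset.sum_insert ha]
      exact (map_add_le_add ν _ _).trans (by linarith)
  have hval : ∀ i : ℕ, ν (w i - w (i+1)) = (1/(N:ℝ)) * ν (y - z) := by
    intro i
    rw [hwdiff i, map_smul_eq_mul]
    simp only [norm_neg, Real.norm_eq_abs]
    rw [abs_of_pos (by positivity : (0:ℝ) < 1/(N:ℝ))]
    congr 1
    rw [show y - z = -(z - y) from by abel, map_neg_eq_map]
  calc ν (y - z + h • (f y - f z)) ≤ _ := hsum
  _ ≤ ∑ i ∈ Finset.range N, (1 + h * κs) * ν (w i - w (i+1)) :=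
      Finset.sum_le_sum fun i hi => hterm i (Finset.mem_range.mp hi)
  _ = ∑ i ∈ Finset.range N, (1 + h * κs) * ((1/(N:ℝ)) * ν (y - z)) := by
      apply Finset.sum_congr rfl; intro i _; rw [hval i]
  _ = (1 + h * κs) * ν (y - z) := by
      rw [Finset.sum_const, Finset.card_range, nsmul_eq_mul]
      field_simp

/-- Right slope estimate for the ν-distance of two trajectories. -/
lemma lemC
    (ν : Seminorm ℝ (Fin n → ℝ)) {C : ℝ} (hup : ∀ y, ν y ≤ C * ‖y‖)
    {f : (Fin n → ℝ) → (Fin n → ℝ)} {φ : ℝ → (Fin n → ℝ) → (Fin n → ℝ)}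
    {a b : Fin n → ℝ} {t : ℝ} (ht : 0 ≤ t)
    (hda : HasDerivWithinAt (fun s => φ s a) (f (φ t a)) (Set.Ici 0) t)
    (hdb : HasDerivWithinAt (fun s => φ s b) (f (φ t b)) (Set.Ici 0) t)
    {κ h₀ : ℝ} (hh₀ : 0 < h₀)
    (hest : ∀ h ∈ Set.Ioo 0 h₀,
      ν ((φ t a - φ t b) + h • (f (φ t a) - f (φ t b)))
        ≤ (1 + h * κ) * ν (φ t a - φ t b))
    {r : ℝ} (hr : κ * ν (φ t a - φ t b) < r) :
    ∀ᶠ z in 𝓝[>] t, slope (fun u => (ν (φ u a - φ u b) : ℝ)) t z < r := by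
  set g : ℝ → ℝ := fun u => (ν (φ u a - φ u b) : ℝ) with hg
  set fa := f (φ t a) with hfa
  set fb := f (φ t b) with hfb
  set v := φ t a - φ t b with hv
  have hsub : Set.Ioi t ⊆ Set.Ici (0:ℝ) \ {t} := fun z hz =>
    ⟨le_trans ht (le_of_lt hz), ne_of_gt hz⟩
  have hmono : 𝓝[>] t ≤ 𝓝[Set.Ici (0:ℝ) \ {t}] t := nhdsWithin_mono t hsub
  have hEa : Tendsto (slope (fun u => φ u a) t) (𝓝[>] t) (𝓝 fa) :=
    (hasDerivWithinAt_iff_tendsto_slope.mp hda).mono_left hmono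
  have hEb : Tendsto (slope (fun u => φ u b) t) (𝓝[>] t) (𝓝 fb) :=
    (hasDerivWithinAt_iff_tendsto_slope.mp hdb).mono_left hmono
  have h2 : Tendsto (fun z => C * (‖slope (fun u => φ u a) t z - fa‖
      + ‖slope (fun u => φ u b) t z - fb‖)) (𝓝[>] t) (𝓝 0) := by
    have h2a : Tendsto (fun z => slope (fun u => φ u a) t z - fa) (𝓝[>] t) (𝓝 (fa - fa)) :=
      hEa.sub tendsto_const_nhds
    have h2b : Tendsto (fun z => slope (fun u => φ u b) t z - fb) (𝓝[>] t) (𝓝 (fb - fb)) :=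
      hEb.sub tendsto_const_nhds
    rw [sub_self] at h2a h2b
    have := ((h2a.norm).add (h2b.norm)).const_mul C
    simpa using this
  have h3 : ∀ᶠ z in 𝓝[>] t, C * (‖slope (fun u => φ u a) t z - fa‖
      + ‖slope (fun u => φ u b) t z - fb‖) < r - κ * g t :=
    h2.eventually (eventually_lt_nhds (by rw [hg]; linarith))
  have h1 : ∀ᶠ z in 𝓝[>] t, z ∈ Set.Ioo t (t + h₀) :=
    Ioo_mem_nhdsGT_of_mem ⟨le_rfl, by linarith⟩
  filter_upwards [h1, h3] with z hz hz3
  have hzt : 0 < z - t := by simp only [Set.mem_Ioo] at hz; linarith [hz.1]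
  have hzh : z - t < h₀ := by simp only [Set.mem_Ioo] at hz; linarith [hz.2]
  set Ra := slope (fun u => φ u a) t z - fa with hRa
  set Rb := slope (fun u => φ u b) t z - fb with hRb
  have hida : φ z a = φ t a + (z - t) • (slope (fun u => φ u a) t z) := by
    rw [slope_def_module, smul_inv_smul₀ (by linarith : z - t ≠ 0)]
    abel
  have hidb : φ z b = φ t b + (z - t) • (slope (fun u => φ u b) t z) := by
    rw [slope_def_module, smul_inv_smul₀ (by linarith : z - t ≠ 0)]
    abel
  have hdecomp : φ z a - φ z b = (v + (z - t) • (fa - fb)) + ((z - t) • Ra - (z - t) • Rb) := by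
    rw [hida, hidb, hRa, hRb, hv]
    module
  have e0 : g z ≤ (1 + (z - t) * κ) * g t + (z - t) * (C * (‖Ra‖ + ‖Rb‖)) := by
    have t1 : ν ((z - t) • Ra) ≤ (z - t) * (C * ‖Ra‖) := by
      rw [map_smul_eq_mul, Real.norm_eq_abs, abs_of_pos hzt]
      exact mul_le_mul_of_nonneg_left (hup Ra) hzt.le
    have t2 : ν ((z - t) • Rb) ≤ (z - t) * (C * ‖Rb‖) := by
      rw [map_smul_eq_mul, Real.norm_eq_abs, abs_of_pos hzt]
      exact mul_le_mul_of_nonneg_left (hup Rb) hzt.le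
    have t3 := hest (z - t) ⟨hzt, hzh⟩
    calc g z = ν (φ z a - φ z b) := rfl
    _ = ν ((v + (z - t) • (fa - fb)) + ((z - t) • Ra - (z - t) • Rb)) := by rw [hdecomp]
    _ ≤ ν (v + (z - t) • (fa - fb)) + ν ((z - t) • Ra - (z - t) • Rb) := map_add_le_add ν _ _
    _ ≤ ν (v + (z - t) • (fa - fb)) + (ν ((z - t) • Ra) + ν ((z - t) • Rb)) := by
        have := map_sub_le_add ν ((z - t) • Ra) ((z - t) • Rb)
        linarith
    _ ≤ (1 + (z - t) * κ) * g t + (z - t) * (C * (‖Ra‖ + ‖Rb‖)) := by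
        have t4 : ν (v + (z - t) • (fa - fb)) ≤ (1 + (z - t) * κ) * ν v := t3
        have hgt : g t = ν v := rfl
        rw [hgt]
        nlinarith [t1, t2]
  rw [slope_def_field, div_lt_iff₀ hzt]
  have t5 : g z - g t ≤ (z - t) * (κ * g t + C * (‖Ra‖ + ‖Rb‖)) := by nlinarith [e0]
  calc (g z - g t) ≤ _ := t5
  _ < (z - t) * r := by
      apply mul_lt_mul_of_pos_left _ hzt
      linarith
  _ = r * (z - t) := mul_comm _ _

/-- Monotonicity from a one-sided slope bound. -/
lemma lemD (g : ℝ → ℝ) {t1 t2 : ℝ} (h12 : t1 ≤ t2) (hcont : ContinuousOn g (Set.Icc t1 t2))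
    (hslope : ∀ x ∈ Set.Ico t1 t2, ∀ r : ℝ, (0:ℝ) < r → ∃ᶠ z in 𝓝[>] x, slope g x z < r) :
    g t2 ≤ g t1 := by
  have := image_le_of_liminf_slope_right_le_deriv_boundary (f := g) (B := fun _ => g t1)
    (B' := fun _ => (0:ℝ)) hcont le_rfl continuousOn_const
    (fun x _ => hasDerivWithinAt_const x _ _) hslope
  exact this (Set.right_mem_Icc.mpr h12)

end Auxiliary

/-- If the time-invariant system `ẋ = f(x)` is interior contractive (IC)
w.r.t. some norm, then it admits a unique equilibrium point `e ∈ Ω`, this `e` lies in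
the interior of `Ω`, and `φ(t,a) → e` as `t → ∞` for every `a ∈ Ω`. -/
theorem interior_contractive_unique_equilibrium {n : ℕ}
    (Ω : Set (Fin n → ℝ)) (hne : Ω.Nonempty) (hcomp : IsCompact Ω) (hconv : Convex ℝ Ω)
    (ν : Seminorm ℝ (Fin n → ℝ)) (hνdef : ∀ y, ν y = 0 → y = 0)
    (f : (Fin n → ℝ) → (Fin n → ℝ)) (hf : ContDiff ℝ 1 f)
    (φ : ℝ → (Fin n → ℝ) → (Fin n → ℝ))
    (hφmem : ∀ t ≥ (0:ℝ), ∀ a ∈ Ω, φ t a ∈ Ω)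
    (hφ0 : ∀ a ∈ Ω, φ 0 a = a)
    (hφgrp : ∀ t ≥ (0:ℝ), ∀ s ≥ (0:ℝ), ∀ a ∈ Ω, φ (t + s) a = φ t (φ s a))
    (hφcont : ContinuousOn (fun p : ℝ × (Fin n → ℝ) => φ p.1 p.2) (Set.Ici 0 ×ˢ Ω))
    (hφode : ∀ a ∈ Ω, ∀ t ≥ (0:ℝ),
      HasDerivWithinAt (fun s => φ s a) (f (φ t a)) (Set.Ici 0) t)
    -- μ is the matrix measure induced by ν
    (μ : Matrix (Fin n) (Fin n) ℝ → ℝ)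
    (hμ : ∀ A : Matrix (Fin n) (Fin n) ℝ,
      Tendsto (fun ε : ℝ => (opNorm ν ((1 : Matrix (Fin n) (Fin n) ℝ) + ε • A) - 1) / ε)
        (𝓝[>] (0:ℝ)) (𝓝 (μ A)))
    -- IC: (a) the boundary is repelling, (b) μ(J(x)) < 0 in the interior
    (hIC1 : ∀ x₀ ∈ frontier Ω, ∀ t > (0:ℝ), φ t x₀ ∉ frontier Ω)
    (hIC2 : ∀ x ∈ interior Ω, μ (jac f x) < 0) :
    ∃ e ∈ interior Ω, f e = 0 ∧ (∀ e' ∈ Ω, f e' = 0 → e' = e) ∧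
      ∀ a ∈ Ω, Tendsto (fun t => φ t a) atTop (𝓝 e) := by
  classical
  rcases Nat.eq_zero_or_pos n with hn0 | hn
  · -- degenerate case `n = 0`: the hypothesis `hμ` is contradictory
    exfalso
    subst hn0
    haveI : Subsingleton (Fin 0 → ℝ) := ⟨fun a b => funext fun i => i.elim0⟩
    have hop : ∀ M : Matrix (Fin 0) (Fin 0) ℝ, opNorm ν M = 0 := by
      intro M
      have hset : {r : ℝ | ∃ y : Fin 0 → ℝ, ν y ≤ 1 ∧ r = ν (M.mulVec y)} = {0} := by
        ext r
        simp only [Set.mem_setOf_eq, Set.mem_singleton_iff]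
        constructor
        · rintro ⟨y, -, rfl⟩
          rw [Subsingleton.elim (M.mulVec y) 0, map_zero]
        · rintro rfl
          exact ⟨0, by rw [map_zero]; norm_num, by rw [Matrix.mulVec_zero, map_zero]⟩
      rw [opNorm, hset, csSup_singleton]
    have h1 := hμ 1
    have h2 : Tendsto (fun ε : ℝ =>
        (opNorm ν ((1 : Matrix (Fin 0) (Fin 0) ℝ) + ε • 1) - 1) / ε) (𝓝[>] (0:ℝ)) atBot := by
      have heq : (fun ε : ℝ => (opNorm ν ((1 : Matrix (Fin 0) (Fin 0) ℝ) + ε • 1) - 1) / ε)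
          = fun ε : ℝ => -ε⁻¹ := by
        funext ε
        rw [hop, div_eq_mul_inv]
        ring
      rw [heq]
      exact tendsto_neg_atBot_iff.mpr tendsto_inv_nhdsGT_zero
    exact absurd h1 (not_tendsto_nhds_of_tendsto_atBot h2 _)
  -- main case `0 < n`
  obtain ⟨C, hC, hup⟩ := nu_upper ν
  obtain ⟨c, hc, hlow⟩ := nu_lower ν hνdef hn hC hup
  have hνcont : Continuous (fun y => (ν y : ℝ)) := nu_continuous ν hC hup
  have numul : ∀ (A : Matrix (Fin n) (Fin n) ℝ) (y : Fin n → ℝ),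
      ν (A.mulVec y) ≤ opNorm ν A * ν y := nu_mulVec_le ν hνdef hc hlow hC hup
  have hAx : ∀ x ∈ interior Ω, ∃ δ > 0, ∃ κ < 0, ∃ h₀ > 0, Metric.ball x δ ⊆ interior Ω ∧
      ∀ y ∈ Metric.ball x δ, ∀ z ∈ Metric.ball x δ, ∀ h ∈ Set.Ioo 0 h₀,
        ν (y - z + h • (f y - f z)) ≤ (1 + h * κ) * ν (y - z) :=
    fun x hx => lemA ν hc hlow hC hup numul hf hμ hx (hIC2 x hx)
  have hB : ∀ y z : Fin n → ℝ, segment ℝ y z ⊆ interior Ω →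
      ∃ κ < 0, ∃ h₀ > 0, ∀ h ∈ Set.Ioo 0 h₀,
        ν (y - z + h • (f y - f z)) ≤ (1 + h * κ) * ν (y - z) :=
    fun y z hs => lemB ν hAx hs
  have hclosed : IsClosed Ω := hcomp.isClosed
  have hmemint : ∀ x ∈ Ω, x ∉ frontier Ω → x ∈ interior Ω := by
    intro x hx hfx
    rw [hclosed.frontier_eq] at hfx
    by_contra h
    exact hfx ⟨hx, h⟩
  have honef : ∀ a ∈ Ω, ∀ t1, 0 ≤ t1 → ∀ t2, t1 < t2 →
      φ t1 a ∈ frontier Ω → φ t2 a ∉ frontier Ω := by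
    intro a ha t1 ht1 t2 h12 hfr
    have h' := hφgrp (t2 - t1) (by linarith) t1 ht1 a ha
    rw [show t2 - t1 + t1 = t2 by ring] at h'
    rw [h']
    exact hIC1 _ hfr _ (by linarith)
  have hInterEv : ∀ a ∈ Ω, ∃ T, 0 ≤ T ∧ ∀ t, T ≤ t → φ t a ∈ interior Ω := by
    intro a ha
    by_cases hex : ∃ t, 0 ≤ t ∧ φ t a ∈ frontier Ω
    · obtain ⟨t0, ht0, hfr⟩ := hex
      refine ⟨t0 + 1, by linarith, fun t ht => ?_⟩
      exact hmemint _ (hφmem t (by linarith) a ha) (honef a ha t0 ht0 t (by linarith) hfr)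
    · refine ⟨0, le_rfl, fun t ht => ?_⟩
      exact hmemint _ (hφmem t ht a ha) (fun hfr => hex ⟨t, ht, hfr⟩)
  have hφcont1 : ∀ a ∈ Ω, ContinuousOn (fun t => φ t a) (Set.Ici (0:ℝ)) := by
    intro a ha
    have hmap : ContinuousOn (fun t : ℝ => ((t, a) : ℝ × (Fin n → ℝ))) (Set.Ici 0) :=
      (continuous_id.prodMk continuous_const).continuousOn
    exact hφcont.comp hmap (fun t ht => ⟨ht, ha⟩)
  -- monotonicity of ν-distance between two trajectories in the interior
  have hmono : ∀ a ∈ Ω, ∀ b ∈ Ω, ∀ T, 0 ≤ T →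
      (∀ t, T ≤ t → φ t a ∈ interior Ω ∧ φ t b ∈ interior Ω) →
      ∀ t1, T ≤ t1 → ∀ t2, t1 ≤ t2 → ν (φ t2 a - φ t2 b) ≤ ν (φ t1 a - φ t1 b) := by
    intro a ha b hb T hT hint t1 ht1 t2 ht2
    have ht10 : (0:ℝ) ≤ t1 := hT.trans ht1
    have hgc : ContinuousOn (fun u => (ν (φ u a - φ u b) : ℝ)) (Set.Icc t1 t2) := by
      apply hνcont.comp_continuousOn
      apply ContinuousOn.sub
      · exact (hφcont1 a ha).mono (fun u hu => le_trans ht10 hu.1)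
      · exact (hφcont1 b hb).mono (fun u hu => le_trans ht10 hu.1)
    apply lemD _ ht2 hgc
    intro x hx r hr
    have hxT : T ≤ x := ht1.trans hx.1
    have hx0 : (0:ℝ) ≤ x := hT.trans hxT
    obtain ⟨hxa, hxb⟩ := hint x hxT
    obtain ⟨κ, hκ, h₀, hh₀, hest⟩ := hB (φ x a) (φ x b)
      ((hconv.interior).segment_subset hxa hxb)
    have hrr : κ * ν (φ x a - φ x b) < r :=
      lt_of_le_of_lt (mul_nonpos_of_nonpos_of_nonneg hκ.le (apply_nonneg ν _)) hr
    exact (lemC ν hup hx0 (hφode a ha x hx0) (hφode b hb x hx0) hh₀ hest hrr).frequently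
  -- strict decrease for distinct interior points
  have hstrict : ∀ a' ∈ Ω, ∀ b' ∈ Ω, a' ∈ interior Ω → b' ∈ interior Ω →
      0 < ν (a' - b') → ∃ z, 0 < z ∧ ν (φ z a' - φ z b') < ν (a' - b') := by
    intro a' ha' b' hb' hia hib hpos
    obtain ⟨κ, hκ, h₀, hh₀, hest⟩ := hB a' b' ((hconv.interior).segment_subset hia hib)
    have hest' : ∀ h ∈ Set.Ioo (0:ℝ) h₀,
        ν ((φ 0 a' - φ 0 b') + h • (f (φ 0 a') - f (φ 0 b')))
          ≤ (1 + h * κ) * ν (φ 0 a' - φ 0 b') := by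
      intro h hh
      rw [hφ0 a' ha', hφ0 b' hb']
      exact hest h hh
    have hrneg : κ * ν (a' - b') / 2 < 0 := by
      apply div_neg_of_neg_of_pos _ two_pos
      exact mul_neg_of_neg_of_pos hκ hpos
    have hr : κ * ν (φ 0 a' - φ 0 b') < κ * ν (a' - b') / 2 := by
      rw [hφ0 a' ha', hφ0 b' hb']
      nlinarith
    have hev := lemC ν hup (f := f) le_rfl (hφode a' ha' 0 le_rfl) (hφode b' hb' 0 le_rfl)
      hh₀ hest' hr
    obtain ⟨z, hslope, hz⟩ := (hev.and self_mem_nhdsWithin).exists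
    refine ⟨z, hz, ?_⟩
    rw [slope_def_field, sub_zero, div_lt_iff₀ hz] at hslope
    have h01 : ν (φ 0 a' - φ 0 b') = ν (a' - b') := by rw [hφ0 a' ha', hφ0 b' hb']
    rw [h01] at hslope
    nlinarith [hz, hrneg]
  -- two interior equilibria coincide
  have hfixeq : ∀ w1 ∈ interior Ω, ∀ w2 ∈ interior Ω, f w1 = 0 → f w2 = 0 → w1 = w2 := by
    intro w1 h1 w2 h2 hf1 hf2
    obtain ⟨κ, hκ, h₀, hh₀, hest⟩ := hB w1 w2 ((hconv.interior).segment_subset h1 h2)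
    have hh := hest (h₀/2) ⟨by linarith, by linarith⟩
    rw [hf1, hf2, sub_zero, smul_zero, add_zero] at hh
    have key : 0 ≤ (h₀/2) * κ * ν (w1 - w2) := by nlinarith [hh]
    have hpos : 0 < (h₀/2) * (-κ) := mul_pos (half_pos hh₀) (neg_pos.mpr hκ)
    have hν0 : ν (w1 - w2) ≤ 0 := by nlinarith [key, hpos]
    have := hνdef _ (le_antisymm hν0 (apply_nonneg ν _))
    exact sub_eq_zero.mp this
  -- for every a ∈ Ω, the trajectory converges to an interior equilibrium
  have hlim : ∀ a ∈ Ω, ∃ w, w ∈ interior Ω ∧ w ∈ Ω ∧ f w = 0 ∧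
      Tendsto (fun t => φ t a) atTop (𝓝 w) := by
    intro a ha
    obtain ⟨T, hT0, hTint⟩ := hInterEv a ha
    have humem : ∀ k : ℕ, φ (T + k) a ∈ Ω := fun k => hφmem _ (by positivity) a ha
    obtain ⟨w, hwΩ, ψ, hψ, hψtend⟩ := hcomp.tendsto_subseq humem
    set τ : ℕ → ℝ := fun k => T + (ψ k : ℝ) with hτ
    have hτ0 : ∀ k, (0:ℝ) ≤ τ k := fun k => by positivity
    have hτT : ∀ k, T ≤ τ k := fun k => le_add_of_nonneg_right (by positivity)
    have hτtend : Tendsto τ atTop atTop := by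
      have h1 : Tendsto (fun k : ℕ => T + (k:ℝ)) atTop atTop :=
        tendsto_atTop_add_const_left _ T tendsto_natCast_atTop_atTop
      apply tendsto_atTop_mono _ h1
      intro k
      exact add_le_add (le_refl T) (by exact_mod_cast hψ.le_apply)
    have hwtend : Tendsto (fun k => φ (τ k) a) atTop (𝓝 w) := hψtend
    have hcont2 : ∀ s, 0 ≤ s → Tendsto (fun k => φ s (φ (τ k) a)) atTop (𝓝 (φ s w)) := by
      intro s hs
      have hcw : ContinuousWithinAt (fun p : ℝ × (Fin n → ℝ) => φ p.1 p.2)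
          (Set.Ici 0 ×ˢ Ω) (s, w) := hφcont (s, w) ⟨hs, hwΩ⟩
      have hpt : Tendsto (fun k => ((s, φ (τ k) a) : ℝ × (Fin n → ℝ))) atTop
          (𝓝[Set.Ici 0 ×ˢ Ω] (s, w)) := by
        rw [tendsto_nhdsWithin_iff]
        exact ⟨tendsto_const_nhds.prodMk_nhds hwtend,
          Eventually.of_forall fun k => ⟨hs, hφmem _ (hτ0 k) a ha⟩⟩
      exact hcw.tendsto.comp hpt
    -- w is a fixed point of the flow
    have hfix : ∀ s, 0 ≤ s → φ s w = w := by
      intro s hs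
      by_contra hne
      have hD : 0 < ν (φ s w - w) := by
        rcases (apply_nonneg ν (φ s w - w)).lt_or_eq with h | h
        · exact h
        · exact absurd (sub_eq_zero.mp (hνdef _ h.symm)) hne
      have hA'Ω : φ s a ∈ Ω := hφmem s hs a ha
      set g : ℝ → ℝ := fun t => (ν (φ t (φ s a) - φ t a) : ℝ) with hg
      have hgant : ∀ t1, T ≤ t1 → ∀ t2, t1 ≤ t2 → g t2 ≤ g t1 := by
        intro t1 ht1 t2 ht2
        apply hmono (φ s a) hA'Ω a ha T hT0 _ t1 ht1 t2 ht2
        intro t ht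
        refine ⟨?_, hTint t ht⟩
        have he : φ t (φ s a) = φ (t + s) a := (hφgrp t (le_trans hT0 ht) s hs a ha).symm
        rw [he]
        exact hTint (t + s) (by linarith)
      have hg0 : ∀ t, 0 ≤ g t := fun t => apply_nonneg ν _
      set G : ℝ → ℝ := fun x => g (T + max x 0) with hG
      have hGant : Antitone G := by
        intro x y hxy
        exact hgant (T + max x 0) (le_add_of_nonneg_right (le_max_right _ _))
          (T + max y 0) (by have hmm : max x 0 ≤ max y 0 := max_le_max hxy le_rfl; linarith)
      have hGbdd : BddBelow (Set.range G) := by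
        refine ⟨0, ?_⟩
        rintro r ⟨x, rfl⟩
        exact hg0 _
      have hGlim : Tendsto G atTop (𝓝 (⨅ x, G x)) := tendsto_atTop_ciInf hGant hGbdd
      set L := ⨅ x, G x with hL
      have hseq : ∀ σ, 0 ≤ σ → Tendsto (fun k => g (τ k + σ)) atTop (𝓝 L) := by
        intro σ hσ
        have h1 : ∀ k, g (τ k + σ) = G (τ k + σ - T) := by
          intro k
          have hmax : max (τ k + σ - T) 0 = τ k + σ - T := max_eq_left (by linarith [hτT k])
          simp only [hG, hmax]
          congr 1
          ring
        have h2 : Tendsto (fun k => τ k + σ - T) atTop atTop := by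
          apply tendsto_atTop_add_const_right
          exact tendsto_atTop_add_const_right _ σ hτtend
        exact (hGlim.comp h2).congr (fun k => (h1 k).symm)
      have hval : ∀ σ, 0 ≤ σ → (ν (φ (σ + s) w - φ σ w) : ℝ) = L := by
        intro σ hσ
        have h2 : ∀ k, g (τ k + σ) = ν (φ (σ + s) (φ (τ k) a) - φ σ (φ (τ k) a)) := by
          intro k
          have e1 : φ (τ k + σ) (φ s a) = φ (σ + s) (φ (τ k) a) := by
            have q1 := hφgrp (τ k + σ) (by linarith [hτ0 k]) s hs a ha
            have q2 := hφgrp (σ + s) (by linarith) (τ k) (hτ0 k) a ha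
            rw [← q1, ← q2]
            congr 1
            ring
          have e2 : φ (τ k + σ) a = φ σ (φ (τ k) a) := by
            rw [← hφgrp σ hσ (τ k) (hτ0 k) a ha]
            congr 1
            ring
          simp only [hg]
          rw [e1, e2]
        have h3 : Tendsto (fun k => (ν (φ (σ + s) (φ (τ k) a) - φ σ (φ (τ k) a)) : ℝ))
            atTop (𝓝 (ν (φ (σ + s) w - φ σ w))) :=
          (hνcont.tendsto _).comp ((hcont2 (σ + s) (by linarith)).sub (hcont2 σ hσ))
        have h4 : Tendsto (fun k => (ν (φ (σ + s) (φ (τ k) a) - φ σ (φ (τ k) a)) : ℝ))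
            atTop (𝓝 L) := (hseq σ hσ).congr h2
        exact tendsto_nhds_unique h3 h4
      have hDL : (ν (φ s w - w) : ℝ) = L := by
        have hv0 := hval 0 le_rfl
        rw [zero_add, hφ0 w hwΩ] at hv0
        exact hv0
      obtain ⟨Tw, hTw0, hTwint⟩ := hInterEv w hwΩ
      have ha1 : φ (Tw + s) w ∈ interior Ω := hTwint _ (by linarith)
      have hb1 : φ Tw w ∈ interior Ω := hTwint _ le_rfl
      have ha1Ω : φ (Tw + s) w ∈ Ω := interior_subset ha1
      have hb1Ω : φ Tw w ∈ Ω := interior_subset hb1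
      have hν1 : (ν (φ (Tw + s) w - φ Tw w) : ℝ) = L := by
        have := hval Tw hTw0
        rwa [show Tw + s = Tw + s from rfl, show Tw + s = s + Tw from by ring] at this ⊢
      have hLpos : 0 < L := hDL ▸ hD
      obtain ⟨z, hz, hzlt⟩ := hstrict _ ha1Ω _ hb1Ω ha1 hb1 (by rw [hν1]; exact hLpos)
      have e3 : φ z (φ (Tw + s) w) = φ ((z + Tw) + s) w := by
        rw [← hφgrp z hz.le (Tw + s) (by linarith) w hwΩ]
        congr 1
        ring
      have e4 : φ z (φ Tw w) = φ (z + Tw) w := by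
        rw [← hφgrp z hz.le Tw hTw0 w hwΩ]
      have hv2 := hval (z + Tw) (by linarith [hz.le])
      rw [e3, e4, hν1] at hzlt
      rw [show (z + Tw) + s = s + (z + Tw) from by ring] at e3
      have : (ν (φ ((z + Tw) + s) w - φ (z + Tw) w) : ℝ) = L := by
        rw [show (z + Tw) + s = s + (z + Tw) from by ring]
        rw [show s + (z + Tw) = (z + Tw) + s from by ring]
        rw [show (z + Tw) + s = s + (z + Tw) from by ring] at hv2 ⊢
        exact hv2
      rw [this] at hzlt
      exact lt_irrefl L hzlt
    -- w is an equilibrium of f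
    have hfw : f w = 0 := by
      have h1 : HasDerivWithinAt (fun u => φ u w) (f (φ 0 w)) (Set.Ici 0) 0 :=
        hφode w hwΩ 0 le_rfl
      have h2 : HasDerivWithinAt (fun _ : ℝ => w) (f (φ 0 w)) (Set.Ici 0) 0 :=
        h1.congr (fun u hu => (hfix u hu).symm) ((hfix 0 le_rfl).symm)
      have h3 : HasDerivWithinAt (fun _ : ℝ => w) 0 (Set.Ici 0) 0 :=
        hasDerivWithinAt_const 0 _ w
      have h4 : f (φ 0 w) = 0 :=
        ((uniqueDiffOn_Ici (0:ℝ)) 0 Set.self_mem_Ici).eq_deriv _ h2 h3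
      rwa [hφ0 w hwΩ] at h4
    -- w is interior
    obtain ⟨Tw, hTw0, hTwint⟩ := hInterEv w hwΩ
    have hwint : w ∈ interior Ω := by
      have := hTwint Tw le_rfl
      rwa [hfix Tw hTw0] at this
    -- convergence
    refine ⟨w, hwint, hwΩ, hfw, ?_⟩
    have hd : ∀ t1, T ≤ t1 → ∀ t2, t1 ≤ t2 →
        (ν (φ t2 a - w) : ℝ) ≤ ν (φ t1 a - w) := by
      intro t1 ht1 t2 ht2
      have hmm := hmono a ha w hwΩ T hT0
        (fun t ht => ⟨hTint t ht, by rw [hfix t (le_trans hT0 ht)]; exact hwint⟩) t1 ht1 t2 ht2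
      rwa [hfix t2 (le_trans hT0 (ht1.trans ht2)), hfix t1 (le_trans hT0 ht1)] at hmm
    have hd0 : Tendsto (fun k => (ν (φ (τ k) a - w) : ℝ)) atTop (𝓝 0) := by
      have h5 : Tendsto (fun k => φ (τ k) a - w) atTop (𝓝 (w - w)) :=
        hwtend.sub tendsto_const_nhds
      rw [sub_self] at h5
      have h6 := (hνcont.tendsto (0 : Fin n → ℝ)).comp h5
      simpa [map_zero, Function.comp_def] using h6
    have hνlim : Tendsto (fun t => (ν (φ t a - w) : ℝ)) atTop (𝓝 0) := by
      rw [Metric.tendsto_atTop]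
      intro ε hε
      obtain ⟨K, hK⟩ := (Metric.tendsto_atTop.mp hd0) ε hε
      refine ⟨τ K, fun t ht => ?_⟩
      have h7 := hK K le_rfl
      rw [Real.dist_eq, sub_zero, abs_of_nonneg (apply_nonneg ν _)] at h7 ⊢
      exact lt_of_le_of_lt (hd (τ K) (hτT K) t ht) h7
    rw [tendsto_iff_norm_sub_tendsto_zero]
    apply squeeze_zero (fun t => norm_nonneg _) (g := fun t => c⁻¹ * ν (φ t a - w))
    · intro t
      calc ‖φ t a - w‖ ≤ ν (φ t a - w) / c := by
            rw [le_div_iff₀ hc]; nlinarith [hlow (φ t a - w)]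
      _ = c⁻¹ * ν (φ t a - w) := by rw [div_eq_inv_mul]
    · have := hνlim.const_mul c⁻¹
      simpa using this
  -- assemble the result
  obtain ⟨a₀, ha₀⟩ := hne
  obtain ⟨e, heint, heΩ, hfe, hetend⟩ := hlim a₀ ha₀
  refine ⟨e, heint, hfe, ?_, ?_⟩
  · -- uniqueness of the equilibrium
    intro e' he' hfe'
    -- e' is a fixed point of the flow, by uniqueness of ODE solutions
    obtain ⟨K0, hK0⟩ := hcomp.exists_bound_of_continuousOn
      ((hf.continuous_fderiv one_ne_zero).continuousOn)
    have hLip : LipschitzOnWith (Real.toNNReal K0) f Ω := by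
      apply hconv.lipschitzOnWith_of_nnnorm_fderiv_le
        (fun x _ => (hf.differentiable one_ne_zero) x)
      intro x hx
      rw [← NNReal.coe_le_coe]
      push_cast
      exact (hK0 x hx).trans (Real.le_coe_toNNReal K0)
    have hfixe' : ∀ t, 0 ≤ t → φ t e' = e' := by
      intro t ht
      have huniq := ODE_solution_unique_of_mem_Icc_right
        (v := fun _ : ℝ => f) (s := fun _ : ℝ => Ω) (fun _ _ => hLip)
        (f := fun u => φ u e') (g := fun _ => e') (a := 0) (b := t)
        (((hφcont1 e' he').mono (fun u hu => hu.1)))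
        (fun u hu => (hφode e' he' u hu.1).mono (Set.Ici_subset_Ici.mpr hu.1))
        (fun u hu => hφmem u hu.1 e' he')
        continuousOn_const
        (fun u _ => by
          have : HasDerivWithinAt (fun _ : ℝ => e') 0 (Set.Ici u) u :=
            hasDerivWithinAt_const u _ e'
          simpa [hfe'] using this)
        (fun _ _ => he')
        (hφ0 e' he')
      exact huniq (Set.right_mem_Icc.mpr ht)
    have he'int : e' ∈ interior Ω := by
      apply hmemint e' he'
      intro hfr
      have := hIC1 e' hfr 1 one_pos
      rw [hfixe' 1 zero_le_one] at this
      exact this hfr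
    exact hfixeq e' he'int e heint hfe' hfe
  · -- convergence for every initial condition
    intro a ha
    obtain ⟨w, hwint, hwΩ, hfw, hwtend⟩ := hlim a ha
    rwa [hfixeq w hwint e heint hfw hfe] at hwtend
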